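/- arXiv:2512.03393 — 2 statements merged into one kernel-verified Lean document; each statement's English description precedes it below -/
import Mathlib

section
/- Let x : ℝ → ℝ^L be differentiable with x(t) = g(t)² · v(t) where g : ℝ → ℝ and v : ℝ → ℝ^L satisfy the gradient flow equations g'(t) = 4 g(t) ⟨λ(t), v(t)⟩ and v'(t) = 2 g(t)² λ(t) for a given continuous λ : ℝ → ℝ^L. Then for any t where ‖x(t)‖₂ ≠ 0, d/dt ‖x(t)‖₂ = (2/‖x(t)‖₂) ⟨λ(t), x(t)⟩ · (g(t)⁴ + 4 g(t)² ‖v(t)‖₂²). -/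
lemma my_hasDerivAt_norm {L : ℕ} {f : ℝ → EuclideanSpace ℝ (Fin L)} {f' : EuclideanSpace ℝ (Fin L)}
    {t : ℝ} (hf : HasDerivAt f f' t) (h : f t ≠ 0) :
    HasDerivAt (fun s => ‖f s‖) ((inner ℝ (f t) f' : ℝ) / ‖f t‖) t := by
  have hne : ‖f t‖ ^ 2 ≠ 0 := pow_ne_zero 2 (norm_ne_zero_iff.mpr h)
  have h1 := (hf.norm_sq).sqrt hne
  have h2 : (fun s => Real.sqrt (‖f s‖ ^ 2)) = fun s => ‖f s‖ := by
    funext s; exact Real.sqrt_sq (norm_nonneg _)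
  rw [h2] at h1
  convert h1 using 1
  rw [Real.sqrt_sq (norm_nonneg _)]
  have hn : ‖f t‖ ≠ 0 := norm_ne_zero_iff.mpr h
  field_simp

theorem stmt5 (L : ℕ) (g : ℝ → ℝ) (v l : ℝ → EuclideanSpace ℝ (Fin L))
    (hl : Continuous l)
    (hg : ∀ t, HasDerivAt g (4 * g t * (inner ℝ (l t) (v t) : ℝ)) t)
    (hv : ∀ t, HasDerivAt v ((2 * (g t)^2) • l t) t)
    (x : ℝ → EuclideanSpace ℝ (Fin L)) (hx : ∀ t, x t = (g t)^2 • v t) :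
    ∀ t : ℝ, ‖x t‖ ≠ 0 →
      deriv (fun s => ‖x s‖) t
        = (2 / ‖x t‖) * (inner ℝ (l t) (x t) : ℝ) * ((g t)^4 + 4 * (g t)^2 * ‖v t‖^2) := by
  intro t ht
  have hxf : x = fun s => (g s)^2 • v s := funext hx
  have hx' : HasDerivAt x
      ((g t)^2 • ((2 * (g t)^2) • l t)
        + ((2:ℕ) * g t ^ (2-1) * (4 * g t * (inner ℝ (l t) (v t) : ℝ))) • v t) t := by
    rw [hxf]
    exact ((hg t).pow 2).smul (hv t)
  have hne : x t ≠ 0 := fun h0 => ht (by rw [h0, norm_zero])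
  have hd := (my_hasDerivAt_norm hx' hne).deriv
  rw [hd, hx t]
  have hn : ‖(g t)^2 • v t‖ ≠ 0 := by rw [← hx t]; exact ht
  simp only [inner_add_right, real_inner_smul_left, real_inner_smul_right, hx t,
    real_inner_self_eq_norm_sq, real_inner_comm (v t) (l t)]
  field_simp
  ring
end

section
/- Let g : ℝ → ℝ and v : ℝ → ℝ^L satisfy perfect balancedness (1/2) g(t)² = ‖v(t)‖₂² for all t, together with the gradient flow equations g'(t) = 4 g(t) ⟨λ(t), v(t)⟩ and v'(t) = 2 g(t)² λ(t). Define x(t) = g(t)² v(t). Then whenever ‖x(t)‖₂ ≠ 0, d/dt ‖x(t)‖₂ = 6 · 2^{2/3} · ⟨λ(t), x(t)/‖x(t)‖₂⟩ · ‖x(t)‖₂^{4/3}. -/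
theorem stmt6 (L : ℕ) (g : ℝ → ℝ) (v l : ℝ → EuclideanSpace ℝ (Fin L))
    (hl : Continuous l)
    (hbal : ∀ t, (1/2) * (g t)^2 = ‖v t‖^2)
    (hg : ∀ t, HasDerivAt g (4 * g t * (inner ℝ (l t) (v t) : ℝ)) t)
    (hv : ∀ t, HasDerivAt v ((2 * (g t)^2) • l t) t)
    (x : ℝ → EuclideanSpace ℝ (Fin L)) (hx : ∀ t, x t = (g t)^2 • v t) :
    ∀ t : ℝ, ‖x t‖ ≠ 0 →
      deriv (fun s => ‖x s‖) t
        = 6 * (2:ℝ) ^ ((2:ℝ)/3) * (inner ℝ (l t) ((‖x t‖)⁻¹ • x t) : ℝ)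
            * ‖x t‖ ^ ((4:ℝ)/3) := by
  intro t ht
  set X' : EuclideanSpace ℝ (Fin L) :=
    (g t ^ 2) • ((2 * g t ^ 2) • l t)
      + (((2:ℕ):ℝ) * g t ^ (2 - 1) * (4 * g t * (inner ℝ (l t) (v t) : ℝ))) • v t with hX'
  have hxd : HasDerivAt x X' t := by
    have h := ((hg t).pow 2).smul (hv t)
    have hfun : x = fun s => (g s)^2 • v s := funext hx
    rw [hfun, hX']; exact h
  have hvv : (inner ℝ (v t) (v t) : ℝ) = (1/2) * (g t)^2 := by
    rw [real_inner_self_eq_norm_sq, ← hbal]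
  have hinner : (inner ℝ (x t) X' : ℝ) = 6 * (g t)^6 * (inner ℝ (l t) (v t) : ℝ) := by
    simp only [hx t, hX', inner_add_right, real_inner_smul_left, real_inner_smul_right, hvv]
    rw [real_inner_comm (v t) (l t)]
    push_cast
    ring
  have hn : HasDerivAt (fun s => ‖x s‖^2) (2 * (inner ℝ (x t) X' : ℝ)) t := hxd.norm_sq
  have hsq : ‖x t‖^2 ≠ 0 := pow_ne_zero 2 ht
  have hs := hn.sqrt hsq
  have hs' : HasDerivAt (fun s => ‖x s‖)
      (2 * (inner ℝ (x t) X' : ℝ) / (2 * Real.sqrt (‖x t‖^2))) t := by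
    simpa only [Real.sqrt_sq (norm_nonneg _)] using hs
  rw [hs'.deriv, Real.sqrt_sq (norm_nonneg _), hinner]
  have hlx : (inner ℝ (l t) ((‖x t‖)⁻¹ • x t) : ℝ) = (‖x t‖)⁻¹ * ((g t)^2 * (inner ℝ (l t) (v t) : ℝ)) := by
    rw [real_inner_smul_right, hx t, real_inner_smul_right]
  have hxsq : ‖x t‖^2 = (g t)^6 / 2 := by
    rw [hx t, norm_smul, mul_pow, ← hbal t]
    have : |(g t)^2| = (g t)^2 := abs_of_nonneg (sq_nonneg _)
    rw [Real.norm_eq_abs, this]; ring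
  have hg2 : (0:ℝ) ≤ (g t)^2 := sq_nonneg _
  have hrpow : ‖x t‖ ^ ((4:ℝ)/3) = (g t)^4 * (2:ℝ) ^ (-((2:ℝ)/3)) := by
    have h1 : ‖x t‖ ^ ((4:ℝ)/3) = (‖x t‖^2 : ℝ) ^ ((2:ℝ)/3) := by
      rw [← Real.rpow_natCast (‖x t‖) 2, ← Real.rpow_mul (norm_nonneg _)]
      norm_num
    rw [h1, hxsq]
    have h2 : (g t)^6 / 2 = (g t)^6 * (2:ℝ)⁻¹ := by ring
    rw [h2, Real.mul_rpow (by positivity) (by positivity)]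
    have h3 : ((g t)^6 : ℝ) ^ ((2:ℝ)/3) = (g t)^4 := by
      have h6 : ((g t)^6 : ℝ) = ((g t)^2) ^ (3:ℕ) := by ring
      rw [h6, ← Real.rpow_natCast ((g t)^2) 3, ← Real.rpow_mul hg2,
        show ((3:ℕ):ℝ) * ((2:ℝ)/3) = ((2:ℕ):ℝ) by norm_num, Real.rpow_natCast]
      ring
    have h4 : ((2:ℝ)⁻¹) ^ ((2:ℝ)/3) = (2:ℝ) ^ (-((2:ℝ)/3)) := by
      rw [← Real.rpow_neg_one, ← Real.rpow_mul (by norm_num)]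
      norm_num
    rw [h3, h4]
  rw [hlx, hrpow]
  have h5 : (2:ℝ) ^ ((2:ℝ)/3) * (2:ℝ) ^ (-((2:ℝ)/3)) = 1 := by
    rw [← Real.rpow_add (by norm_num)]; norm_num
  have key : 6 * (2:ℝ) ^ ((2:ℝ)/3) * ((‖x t‖)⁻¹ * ((g t)^2 * (inner ℝ (l t) (v t) : ℝ))) * ((g t)^4 * (2:ℝ) ^ (-((2:ℝ)/3)))
      = ((2:ℝ) ^ ((2:ℝ)/3) * (2:ℝ) ^ (-((2:ℝ)/3))) * (6 * (g t)^6 * (inner ℝ (l t) (v t) : ℝ) * (‖x t‖)⁻¹) := by ring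
  rw [key, h5, one_mul]
  field_simp
end
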